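/- arXiv:1007.1615 — 3 statements merged into one kernel-verified Lean document; each statement's English description precedes it below -/
import Mathlib

section
/- Every tree T with maximum degree Δ satisfies lc(T) = ⌈Δ/2⌉ + 1. -/
open SimpleGraph Finset

/-- The subgraph of `G` induced by the union of the two color classes `a` and `b`
of the coloring `c` (as a spanning subgraph of `G`). -/
def pairGraph {V α : Type*} (G : SimpleGraph V) (c : V → α) (a b : α) : SimpleGraph V where
  Adj x y := G.Adj x y ∧ (c x = a ∨ c x = b) ∧ (c y = a ∨ c y = b)
  symm := ⟨fun x y h => ⟨h.1.symm, h.2.2, h.2.1⟩⟩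
  loopless := ⟨fun x h => G.loopless.irrefl x h.1⟩

/-- A graph has maximum degree at most two:  no vertex has three distinct neighbors. -/
def MaxDegLE2 {V : Type*} (H : SimpleGraph V) : Prop :=
  ∀ v x y z : V, H.Adj v x → H.Adj v y → H.Adj v z → x = y ∨ x = z ∨ y = z

/-- `c` is a linear coloring of `G`: a proper coloring in which the union of any
two color classes induces a linear forest (an acyclic graph of maximum degree at most two,
i.e. a disjoint union of paths). -/
def IsLinearColoring {V α : Type*} (G : SimpleGraph V) (c : V → α) : Prop :=
  (∀ ⦃x y⦄, G.Adj x y → c x ≠ c y) ∧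
  ∀ a b : α, (pairGraph G c a b).IsAcyclic ∧ MaxDegLE2 (pairGraph G c a b)

/-- The linear chromatic number `lc(G)`. -/
noncomputable def linChromNum {V : Type*} (G : SimpleGraph V) : ℕ :=
  sInf {n : ℕ | ∃ c : V → Fin n, IsLinearColoring G c}

/-- `G` is linearly `k`-choosable: from any lists of size at least `k` one can choose
a linear coloring. -/
def LinChoosable {V : Type*} (G : SimpleGraph V) (k : ℕ) : Prop :=
  ∀ L : V → Finset ℕ, (∀ v, k ≤ (L v).card) →
    ∃ c : V → ℕ, (∀ v, c v ∈ L v) ∧ IsLinearColoring G c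

/-- The linear list chromatic number `lc_ℓ(G)`. -/
noncomputable def linListChromNum {V : Type*} (G : SimpleGraph V) : ℕ :=
  sInf {k : ℕ | LinChoosable G k}

/-- `mad(G) ≤ q`: every nonempty subgraph has average degree at most `q`. -/
def MadLE {V : Type*} [Fintype V] (G : SimpleGraph V) (q : ℚ) : Prop :=
  ∀ H : G.Subgraph, H.verts.Nonempty →
    2 * (H.edgeSet.ncard : ℚ) ≤ q * (H.verts.ncard : ℚ)

/-- `mad(G) < q`: every nonempty subgraph has average degree less than `q`. -/
def MadLT {V : Type*} [Fintype V] (G : SimpleGraph V) (q : ℚ) : Prop :=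
  ∀ H : G.Subgraph, H.verts.Nonempty →
    2 * (H.edgeSet.ncard : ℚ) < q * (H.verts.ncard : ℚ)

/-- `mad(G) ≥ q`: some nonempty subgraph has average degree at least `q`. -/
def MadGE {V : Type*} [Fintype V] (G : SimpleGraph V) (q : ℚ) : Prop :=
  ∃ H : G.Subgraph, H.verts.Nonempty ∧ q * (H.verts.ncard : ℚ) ≤ 2 * (H.edgeSet.ncard : ℚ)

/-- `mad(G) = q`: the maximum average degree over nonempty subgraphs equals `q`. -/
def MadEq {V : Type*} [Fintype V] (G : SimpleGraph V) (q : ℚ) : Prop :=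
  MadLE G q ∧ ∃ H : G.Subgraph, H.verts.Nonempty ∧
    2 * (H.edgeSet.ncard : ℚ) = q * (H.verts.ncard : ℚ)

/-- `H` is a minor of `G`. -/
def IsMinorOf {W V : Type*} (H : SimpleGraph W) (G : SimpleGraph V) : Prop :=
  ∃ f : V → Option W,
    (∀ w : W, ∃ v : V, f v = some w) ∧
    (∀ w : W, (G.induce {v | f v = some w}).Connected) ∧
    (∀ w₁ w₂ : W, H.Adj w₁ w₂ →
      ∃ v₁ v₂ : V, f v₁ = some w₁ ∧ f v₂ = some w₂ ∧ G.Adj v₁ v₂)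

/-- Planarity, via Wagner's theorem: no `K₅` minor and no `K_{3,3}` minor. -/
def IsPlanar {V : Type*} (G : SimpleGraph V) : Prop :=
  ¬ IsMinorOf (⊤ : SimpleGraph (Fin 5)) G ∧
  ¬ IsMinorOf (completeBipartiteGraph (Fin 3) (Fin 3)) G

universe u

lemma myNcard_le_two_elim {α : Type*} {S : Set α} (hS : S.Finite) (h : S.ncard ≤ 2)
    {x y z : α} (hx : x ∈ S) (hy : y ∈ S) (hz : z ∈ S) : x = y ∨ x = z ∨ y = z := by
  by_contra hc
  push_neg at hc
  obtain ⟨hxy, hxz, hyz⟩ := hc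
  have hsub : ({x, y, z} : Set α) ⊆ S := by
    intro w hw
    rcases hw with rfl | rfl | rfl <;> assumption
  have h3 : ({x, y, z} : Set α).ncard = 3 := by
    rw [Set.ncard_insert_of_notMem (by simp [hxy, hxz]) (Set.toFinite _), Set.ncard_pair hyz]
  have := Set.ncard_le_ncard hsub hS
  omega

lemma myCard_le_two {α : Type*} [DecidableEq α] {s : Finset α}
    (h : ∀ x y z, x ∈ s → y ∈ s → z ∈ s → x = y ∨ x = z ∨ y = z) : s.card ≤ 2 := by
  by_contra hc
  push_neg at hc
  obtain ⟨t, hts, ht3⟩ := Finset.exists_subset_card_eq (s := s) (n := 3) (by omega)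
  rw [Finset.card_eq_three] at ht3
  obtain ⟨a, b, c, hab, hac, hbc, rfl⟩ := ht3
  rcases h a b c (hts (by simp)) (hts (by simp)) (hts (by simp)) with h | h | h <;> simp_all


lemma myAcyclic_mono {V : Type*} {H G : SimpleGraph V} (h : H ≤ G) (hG : G.IsAcyclic) :
    H.IsAcyclic := fun _ c hc => hG (c.mapLe h) (hc.mapLe h)

lemma myInduce_acyclic {V : Type*} {G : SimpleGraph V} (hG : G.IsAcyclic) (s : Set V) :
    (G.induce s).IsAcyclic := fun _ c hc =>
  hG (c.map (SimpleGraph.Embedding.induce (G := G) s).toHom)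
    (hc.map (SimpleGraph.Embedding.induce (G := G) s).injective)

lemma myExists_leaf {V : Type*} [Fintype V] (T : SimpleGraph V) [DecidableRel T.Adj]
    (hT : T.IsTree) (h2 : 2 ≤ Fintype.card V) : ∃ ℓ, T.degree ℓ = 1 := by
  classical
  by_contra hc
  push_neg at hc
  have hdeg2 : ∀ v, 2 ≤ T.degree v := by
    intro v
    obtain ⟨w, hw⟩ := Fintype.exists_ne_of_one_lt_card (by omega) v
    obtain ⟨p⟩ := hT.isConnected.preconnected v w
    have h1 : 0 < T.degree v := by
      cases p with
      | nil => exact absurd rfl hw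
      | cons h q => exact T.degree_pos_iff_exists_adj v |>.mpr ⟨_, h⟩
    have := hc v
    omega
  have hE := hT.card_edgeFinset
  have hsum := T.sum_degrees_eq_twice_card_edges
  have : Finset.univ.card * 2 ≤ ∑ v ∈ Finset.univ, T.degree v :=
    Finset.card_nsmul_le_sum _ _ _ (fun v _ => hdeg2 v)
  simp only [Finset.card_univ] at this
  omega

lemma myWalk_avoid {V : Type*} {T : SimpleGraph V} {ℓ u₀ : V}
    (huniq : ∀ w, T.Adj ℓ w → w = u₀) :
    ∀ {v : V} (p : T.Walk v u₀), p.IsPath → v ≠ ℓ → ℓ ∉ p.support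
  | _, Walk.nil, _, hv => by simp [Ne.symm hv]
  | v, Walk.cons (v := w) h q, hp, hv => by
    by_cases hw : w = ℓ
    · subst hw
      have hv0 : v = u₀ := huniq v h.symm
      subst hv0
      rw [Walk.isPath_iff_eq_nil] at hp
      simp at hp
    · have hq := myWalk_avoid huniq q hp.of_cons hw
      simp only [Walk.support_cons, List.mem_cons]
      rintro (rfl | hmem)
      · exact hv rfl
      · exact hq hmem

lemma myAux (D : ℕ) (n : ℕ) : ∀ (V : Type u) [Fintype V] (T : SimpleGraph V),
    Fintype.card V = n → T.IsTree → (∀ v, (T.neighborSet v).ncard ≤ D) →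
    ∃ c : V → Fin ((D + 1) / 2 + 1),
      (∀ ⦃x y⦄, T.Adj x y → c x ≠ c y) ∧
      (∀ v a, {w | T.Adj v w ∧ c w = a}.ncard ≤ 2) := by
  induction n using Nat.strong_induction_on with
  | _ n ih =>
  intro V _ T hcard hT hdeg
  classical
  by_cases h1 : Fintype.card V ≤ 1
  · have hss : Subsingleton V := Fintype.card_le_one_iff_subsingleton.mp h1
    refine ⟨fun _ => ⟨0, by omega⟩, ?_, ?_⟩
    · intro x y hxy
      exact absurd (Subsingleton.elim x y) hxy.ne
    · intro v a
      have he : {w | T.Adj v w ∧ True} ⊆ (∅ : Set V) := by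
        intro w hw
        exact absurd (Subsingleton.elim v w) hw.1.ne
      have : {w | T.Adj v w ∧ (fun _ => (⟨0, by omega⟩ : Fin ((D+1)/2+1))) w = a} ⊆ ∅ := by
        intro w hw
        exact absurd (Subsingleton.elim v w) hw.1.ne
      have := Set.ncard_le_ncard this (Set.finite_empty)
      simpa using (le_trans this (by simp))
  · push_neg at h1
    obtain ⟨ℓ, hℓ⟩ := myExists_leaf T hT (by omega)
    rw [← T.card_neighborFinset_eq_degree] at hℓ
    obtain ⟨u₀, hu₀⟩ := Finset.card_eq_one.mp hℓ
    have hadj : T.Adj ℓ u₀ := by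
      rw [← T.mem_neighborFinset, hu₀]; exact Finset.mem_singleton_self _
    have huniq : ∀ w, T.Adj ℓ w → w = u₀ := by
      intro w hw
      have : w ∈ T.neighborFinset ℓ := (T.mem_neighborFinset ℓ w).mpr hw
      rw [hu₀] at this
      exact Finset.mem_singleton.mp this
    have hlu : ℓ ≠ u₀ := hadj.ne
    set s : Set V := {x | x ≠ ℓ} with hs
    have hu₀s : u₀ ∈ s := Ne.symm hlu
    set T' := T.induce s with hT'
    have hconn' : T'.Connected := by
      apply T.induce_connected_of_patches u₀ hu₀s
      intro v hv
      obtain ⟨q⟩ := hT.isConnected.preconnected v u₀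
      let p := q.toPath
      have hns : ℓ ∉ (p : T.Walk v u₀).support := myWalk_avoid huniq _ p.2 hv
      refine ⟨{x | x ∈ (p : T.Walk v u₀).support}, ?_, Walk.end_mem_support _,
        Walk.start_mem_support _, ?_⟩
      · intro x hx
        intro hxl
        exact hns (hxl ▸ hx)
      · exact ((p : T.Walk v u₀).connected_induce_support).preconnected _ _
    have htree' : T'.IsTree := ⟨hconn', myInduce_acyclic hT.IsAcyclic s⟩
    have hcards : Fintype.card s = n - 1 := by
      have hfin : s.toFinset = Finset.univ.erase ℓ := by
        ext x; simp [hs]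
      rw [← Set.toFinset_card, hfin, Finset.card_erase_of_mem (Finset.mem_univ _),
        Finset.card_univ, hcard]
    have hdeg' : ∀ x : s, (T'.neighborSet x).ncard ≤ D := by
      intro x
      have hsub : Subtype.val '' (T'.neighborSet x) ⊆ T.neighborSet (x : V) := by
        rintro _ ⟨w, hw, rfl⟩
        exact hw
      calc (T'.neighborSet x).ncard = (Subtype.val '' (T'.neighborSet x)).ncard :=
            (Set.ncard_image_of_injective _ Subtype.val_injective).symm
        _ ≤ (T.neighborSet (x : V)).ncard := Set.ncard_le_ncard hsub (Set.toFinite _)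
        _ ≤ D := hdeg _
    obtain ⟨c', hc'p, hc'c⟩ := ih (n - 1) (by omega) s T' hcards htree' hdeg'
    have hD1 : 1 ≤ D := by
      have h0 : 0 < (T.neighborSet u₀).ncard := by
        rw [Set.ncard_pos (Set.toFinite _)]
        exact ⟨ℓ, hadj.symm⟩
      have := hdeg u₀
      omega
    set c₀ : V → Fin ((D + 1) / 2 + 1) :=
      fun v => if h : v ≠ ℓ then c' ⟨v, h⟩ else ⟨0, by omega⟩ with hc₀
    have hc₀u : c₀ u₀ = c' ⟨u₀, hu₀s⟩ := by simp [hc₀, Ne.symm hlu]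
    set At : Finset V := (T.neighborFinset u₀).erase ℓ with hAt
    have hAtcard : At.card ≤ D - 1 := by
      have h1 : At.card = (T.neighborFinset u₀).card - 1 :=
        Finset.card_erase_of_mem ((T.mem_neighborFinset u₀ ℓ).mpr hadj.symm)
      have h2 : (T.neighborFinset u₀).card = (T.neighborSet u₀).ncard := by
        rw [Set.ncard_eq_toFinset_card']
        congr 1
      have := hdeg u₀
      omega
    have hAtmem : ∀ w ∈ At, w ≠ ℓ ∧ T.Adj u₀ w := by
      intro w hw
      rw [hAt, Finset.mem_erase, T.mem_neighborFinset] at hw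
      exact hw
    have hcd : ∀ (w : V) (h : w ≠ ℓ), c₀ w = c' ⟨w, h⟩ := fun w h => dif_pos h
    have hAtne : ∀ w ∈ At, c₀ w ≠ c₀ u₀ := by
      intro w hw
      obtain ⟨hwl, hwadj⟩ := hAtmem w hw
      have hadj' : T'.Adj ⟨u₀, hu₀s⟩ ⟨w, hwl⟩ := hwadj
      have h2 := hc'p hadj'
      rw [hcd w hwl, hc₀u]
      exact fun h => h2 h.symm
    have hex : ∃ a₀, a₀ ≠ c₀ u₀ ∧ (At.filter (fun w => c₀ w = a₀)).card ≤ 1 := by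
      by_contra h
      push_neg at h
      have hfib : At.card = ∑ a ∈ Finset.univ, (At.filter (fun w => c₀ w = a)).card :=
        Finset.card_eq_sum_card_fiberwise (fun w _ => Finset.mem_univ _)
      have hge : ∀ a ∈ Finset.univ.erase (c₀ u₀),
          2 ≤ (At.filter (fun w => c₀ w = a)).card := by
        intro a ha
        have := h a (Finset.ne_of_mem_erase ha)
        omega
      have h2le : (Finset.univ.erase (c₀ u₀)).card * 2 ≤
          ∑ a ∈ Finset.univ.erase (c₀ u₀), (At.filter (fun w => c₀ w = a)).card :=
        Finset.card_nsmul_le_sum _ _ _ hge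
      have hsub : ∑ a ∈ Finset.univ.erase (c₀ u₀), (At.filter (fun w => c₀ w = a)).card ≤
          ∑ a ∈ Finset.univ, (At.filter (fun w => c₀ w = a)).card :=
        Finset.sum_le_sum_of_subset (Finset.erase_subset _ _)
      have hcarde : (Finset.univ.erase (c₀ u₀)).card = (D + 1) / 2 := by
        rw [Finset.card_erase_of_mem (Finset.mem_univ _), Finset.card_univ, Fintype.card_fin]
        omega
      omega
    obtain ⟨a₀, ha₀ne, ha₀cnt⟩ := hex
    refine ⟨fun v => if v = ℓ then a₀ else c₀ v, ?_, ?_⟩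
    · intro x y hxy
      by_cases hx : x = ℓ
      · have hy' : y = u₀ := by rw [hx] at hxy; exact huniq y hxy
        rw [hx, hy']
        simp only [if_pos rfl, if_neg (Ne.symm hlu)]
        exact ha₀ne
      · by_cases hy : y = ℓ
        · have hx2 : x = u₀ := by rw [hy] at hxy; exact huniq x hxy.symm
          rw [hy, hx2]
          simp only [if_pos rfl, if_neg (Ne.symm hlu)]
          exact fun h => ha₀ne h.symm
        · have hadj' : T'.Adj ⟨x, hx⟩ ⟨y, hy⟩ := hxy
          have h2 := hc'p hadj'
          simp only [if_neg hx, if_neg hy]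
          rw [hcd x hx, hcd y hy]
          exact h2
    · intro v a
      by_cases hv : v = ℓ
      · rw [hv]
        have hsub : {w | T.Adj ℓ w ∧ (if w = ℓ then a₀ else c₀ w) = a} ⊆ {u₀} := by
          intro w hw
          simp only [Set.mem_setOf_eq] at hw
          exact huniq w hw.1
        calc {w | T.Adj ℓ w ∧ (if w = ℓ then a₀ else c₀ w) = a}.ncard
            ≤ ({u₀} : Set V).ncard := Set.ncard_le_ncard hsub (Set.finite_singleton _)
          _ ≤ 2 := by rw [Set.ncard_singleton]; omega
      · by_cases hcase : v = u₀ ∧ a = a₀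
        · obtain ⟨hv1, ha1⟩ := hcase
          rw [hv1, ha1]
          have hB1 : (Subtype.val '' {w : s | T.Adj u₀ (w : V) ∧ c' w = a₀}).ncard ≤ 1 := by
            have hsub : Subtype.val '' {w : s | T.Adj u₀ (w : V) ∧ c' w = a₀} ⊆
                ((At.filter (fun w => c₀ w = a₀) : Finset V) : Set V) := by
              rintro _ ⟨⟨w, hws⟩, hwmem, rfl⟩
              simp only [Set.mem_setOf_eq] at hwmem
              obtain ⟨hwa, hwc⟩ := hwmem
              simp only [Finset.coe_filter, Set.mem_setOf_eq]
              refine ⟨?_, ?_⟩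
              · rw [hAt, Finset.mem_erase, T.mem_neighborFinset]
                exact ⟨hws, hwa⟩
              · rw [hcd w hws]
                exact hwc
            calc (Subtype.val '' {w : s | T.Adj u₀ (w : V) ∧ c' w = a₀}).ncard
                ≤ ((At.filter (fun w => c₀ w = a₀) : Finset V) : Set V).ncard :=
                  Set.ncard_le_ncard hsub (Set.toFinite _)
              _ = (At.filter (fun w => c₀ w = a₀)).card := Set.ncard_coe_finset _
              _ ≤ 1 := ha₀cnt
          have hsub2 : {w | T.Adj u₀ w ∧ (if w = ℓ then a₀ else c₀ w) = a₀} ⊆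
              insert ℓ (Subtype.val '' {w : s | T.Adj u₀ (w : V) ∧ c' w = a₀}) := by
            intro w hw
            simp only [Set.mem_setOf_eq] at hw
            by_cases hwl : w = ℓ
            · exact Set.mem_insert_iff.mpr (Or.inl hwl)
            · refine Set.mem_insert_iff.mpr (Or.inr ⟨⟨w, hwl⟩, ?_, rfl⟩)
              simp only [Set.mem_setOf_eq]
              refine ⟨hw.1, ?_⟩
              have h3 := hw.2
              rw [if_neg hwl, hcd w hwl] at h3
              exact h3
          calc {w | T.Adj u₀ w ∧ (if w = ℓ then a₀ else c₀ w) = a₀}.ncard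
              ≤ (insert ℓ (Subtype.val '' {w : s | T.Adj u₀ (w : V) ∧ c' w = a₀})).ncard :=
                Set.ncard_le_ncard hsub2 (Set.toFinite _)
            _ ≤ (Subtype.val '' {w : s | T.Adj u₀ (w : V) ∧ c' w = a₀}).ncard + 1 :=
                Set.ncard_insert_le _ _
            _ ≤ 2 := by omega
        · have hsub : {w | T.Adj v w ∧ (if w = ℓ then a₀ else c₀ w) = a} ⊆
              Subtype.val '' {w : s | T'.Adj ⟨v, hv⟩ w ∧ c' w = a} := by
            intro w hw
            simp only [Set.mem_setOf_eq] at hw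
            have hwl : w ≠ ℓ := by
              intro hwe
              apply hcase
              have h3 := hw.2
              rw [if_pos hwe] at h3
              exact ⟨huniq v (hwe ▸ hw.1).symm, h3.symm⟩
            refine ⟨⟨w, hwl⟩, ?_, rfl⟩
            simp only [Set.mem_setOf_eq]
            refine ⟨hw.1, ?_⟩
            have h3 := hw.2
            rw [if_neg hwl, hcd w hwl] at h3
            exact h3
          calc {w | T.Adj v w ∧ (if w = ℓ then a₀ else c₀ w) = a}.ncard
              ≤ (Subtype.val '' {w : s | T'.Adj ⟨v, hv⟩ w ∧ c' w = a}).ncard :=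
                Set.ncard_le_ncard hsub (Set.toFinite _)
            _ = {w : s | T'.Adj ⟨v, hv⟩ w ∧ c' w = a}.ncard :=
                Set.ncard_image_of_injective _ Subtype.val_injective
            _ ≤ 2 := hc'c _ _

/-- Every tree `T` with maximum degree `Δ` satisfies `lc(T) = ⌈Δ/2⌉ + 1`. -/
theorem linChromNum_tree {V : Type*} [Fintype V] (T : SimpleGraph V) [DecidableRel T.Adj]
    (hT : T.IsTree) :
    linChromNum T = (T.maxDegree + 1) / 2 + 1 := by
  classical
  have hne : Nonempty V := hT.isConnected.nonempty
  set D := T.maxDegree with hD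
  -- upper bound: a linear coloring with (D+1)/2+1 colors
  have hdegs : ∀ v, (T.neighborSet v).ncard ≤ D := by
    intro v
    rw [Set.ncard_eq_toFinset_card', ← neighborFinset_def]
    exact T.degree_le_maxDegree v
  obtain ⟨c, hcp, hcc⟩ := myAux D (Fintype.card V) V T rfl hT hdegs
  have hmem : ((D + 1) / 2 + 1) ∈ {n : ℕ | ∃ c : V → Fin n, IsLinearColoring T c} := by
    refine ⟨c, hcp, ?_⟩
    intro a b
    constructor
    · exact myAcyclic_mono (by intro v w h; exact h.1) hT.IsAcyclic
    · intro v x y z h1 h2 h3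
      have hb : ∀ w : V, (pairGraph T c a b).Adj v w →
          (c v = a → w ∈ {w | T.Adj v w ∧ c w = b}) ∧
          (c v = b → w ∈ {w | T.Adj v w ∧ c w = a}) := by
        intro w hw
        constructor
        · intro hva
          rcases hw.2.2 with hwc | hwc
          · exact absurd (hva.trans hwc.symm) (hcp hw.1)
          · exact ⟨hw.1, hwc⟩
        · intro hvb
          rcases hw.2.2 with hwc | hwc
          · exact ⟨hw.1, hwc⟩
          · exact absurd (hvb.trans hwc.symm) (hcp hw.1)
      rcases h1.2.1 with hva | hvb
      · exact myNcard_le_two_elim (Set.toFinite _) (hcc v b)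
          ((hb x h1).1 hva) ((hb y h2).1 hva) ((hb z h3).1 hva)
      · exact myNcard_le_two_elim (Set.toFinite _) (hcc v a)
          ((hb x h1).2 hvb) ((hb y h2).2 hvb) ((hb z h3).2 hvb)
  -- lower bound
  have hlow : ∀ m ∈ {n : ℕ | ∃ c : V → Fin n, IsLinearColoring T c}, (D + 1) / 2 + 1 ≤ m := by
    rintro m ⟨c', hp', hpair'⟩
    obtain ⟨v, hv⟩ := T.exists_maximal_degree_vertex
    have hm0 : 0 < m := (c' v).pos
    have hcnt : ∀ b : Fin m, ((T.neighborFinset v).filter (fun w => c' w = b)).card ≤ 2 := by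
      intro b
      apply myCard_le_two
      intro x y z hx hy hz
      rw [Finset.mem_filter, T.mem_neighborFinset] at hx hy hz
      exact (hpair' (c' v) b).2 v x y z ⟨hx.1, Or.inl rfl, Or.inr hx.2⟩
        ⟨hy.1, Or.inl rfl, Or.inr hy.2⟩ ⟨hz.1, Or.inl rfl, Or.inr hz.2⟩
    have hfib : (T.neighborFinset v).card =
        ∑ b ∈ Finset.univ, ((T.neighborFinset v).filter (fun w => c' w = b)).card :=
      Finset.card_eq_sum_card_fiberwise (fun w _ => Finset.mem_univ _)
    have hzero : ((T.neighborFinset v).filter (fun w => c' w = c' v)).card = 0 := by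
      rw [Finset.card_eq_zero, Finset.filter_eq_empty_iff]
      intro w hw
      rw [T.mem_neighborFinset] at hw
      exact fun h => (hp' hw) h.symm
    have hsplit : ∑ b ∈ Finset.univ, ((T.neighborFinset v).filter (fun w => c' w = b)).card =
        ∑ b ∈ Finset.univ.erase (c' v), ((T.neighborFinset v).filter (fun w => c' w = b)).card
          + ((T.neighborFinset v).filter (fun w => c' w = c' v)).card :=
      (Finset.sum_erase_add _ _ (Finset.mem_univ _)).symm
    have hbound : ∑ b ∈ Finset.univ.erase (c' v),
        ((T.neighborFinset v).filter (fun w => c' w = b)).card ≤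
        (Finset.univ.erase (c' v)).card * 2 := by
      apply Finset.sum_le_card_nsmul
      intro b _
      exact hcnt b
    have hcarde : (Finset.univ.erase (c' v)).card = m - 1 := by
      rw [Finset.card_erase_of_mem (Finset.mem_univ _), Finset.card_univ, Fintype.card_fin]
    have hdv : T.degree v = (T.neighborFinset v).card := rfl
    have hDd : D = T.degree v := hv
    omega
  rw [linChromNum]
  exact le_antisymm (Nat.sInf_le hmem) (le_csInf ⟨_, hmem⟩ hlow)
end

section
/- If G is a graph with mad(G) < 3, minimum degree δ(G) ≥ 2, and Δ(G) ≥ 9, then G contains one of: (RC1) a 2-vertex u with neighbors v, w such that ⌈d(v)/2⌉ + ⌈d(w)/2⌉ < ⌈Δ(G)/2⌉ + 2; (RC2) a 3-vertex adjacent to a 2-vertex and to two other vertices v, w with d(v) + d(w) ≤ 8; (RC3) a 3-vertex adjacent to two 2-vertices; (RC4) a 4-vertex adjacent to four 2-vertices; (RC5) a 5-vertex u adjacent to four 2-vertices, each of which has its other neighbor of degree at most 8, with u also adjacent to a fifth vertex of degree at most 3. -/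
open SimpleGraph Finset

section Configs

variable {V : Type*} [Fintype V] (G : SimpleGraph V) [DecidableRel G.Adj]

/-- (RC1) a `2`-vertex `u` with neighbors `v, w` such that
`⌈d(v)/2⌉ + ⌈d(w)/2⌉ < ⌈Δ(G)/2⌉ + 2`. -/
def ConfigRC1 : Prop :=
  ∃ u v w : V, v ≠ w ∧ G.Adj u v ∧ G.Adj u w ∧ G.degree u = 2 ∧
    (G.degree v + 1) / 2 + (G.degree w + 1) / 2 < (G.maxDegree + 1) / 2 + 2

/-- (RC2) a `3`-vertex adjacent to a `2`-vertex and to two other vertices `v, w`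
with `d(v) + d(w) ≤ 8`. -/
def ConfigRC2 : Prop :=
  ∃ u x v w : V, x ≠ v ∧ x ≠ w ∧ v ≠ w ∧ G.Adj u x ∧ G.Adj u v ∧ G.Adj u w ∧
    G.degree u = 3 ∧ G.degree x = 2 ∧ G.degree v + G.degree w ≤ 8

/-- (RC3) a `3`-vertex adjacent to two `2`-vertices. -/
def ConfigRC3 : Prop :=
  ∃ u v w : V, v ≠ w ∧ G.Adj u v ∧ G.Adj u w ∧ G.degree u = 3 ∧
    G.degree v = 2 ∧ G.degree w = 2

/-- (RC4) a `4`-vertex adjacent to four `2`-vertices. -/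
def ConfigRC4 : Prop :=
  ∃ u v₁ v₂ v₃ v₄ : V, [v₁, v₂, v₃, v₄].Nodup ∧ G.degree u = 4 ∧
    G.Adj u v₁ ∧ G.Adj u v₂ ∧ G.Adj u v₃ ∧ G.Adj u v₄ ∧
    G.degree v₁ = 2 ∧ G.degree v₂ = 2 ∧ G.degree v₃ = 2 ∧ G.degree v₄ = 2

/-- (RC5) a `5`-vertex `u` adjacent to four `2`-vertices, each of whose other neighbor has
degree at most `8`, with `u` also adjacent to a fifth vertex of degree at most `3`. -/
def ConfigRC5 : Prop :=
  ∃ u v₁ v₂ v₃ v₄ v₅ : V, [v₁, v₂, v₃, v₄, v₅].Nodup ∧ G.degree u = 5 ∧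
    G.Adj u v₁ ∧ G.Adj u v₂ ∧ G.Adj u v₃ ∧ G.Adj u v₄ ∧ G.Adj u v₅ ∧
    G.degree v₁ = 2 ∧ G.degree v₂ = 2 ∧ G.degree v₃ = 2 ∧ G.degree v₄ = 2 ∧
    (∀ v ∈ [v₁, v₂, v₃, v₄], ∀ w : V, G.Adj v w → w ≠ u → G.degree w ≤ 8) ∧
    G.degree v₅ ≤ 3

end Configs

section Aux
variable {V : Type*} [Fintype V] [DecidableEq V] (G : SimpleGraph V) [DecidableRel G.Adj]

/-- sum of degrees of neighbors of `u` other than `v`. -/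
def odeg (v u : V) : ℕ := ∑ w ∈ (G.neighborFinset u).erase v, G.degree w

def Weak3 (u : V) : Prop := G.degree u = 3 ∧ ∃ w, G.Adj u w ∧ G.degree w = 2

/-- amount a vertex of degree `a` pays a 2-vertex whose other neighbor has degree `b`. -/
def payf (a b : ℕ) : ℚ :=
  if a ≤ 2 then 0
  else if a ≤ 4 then 1/3
  else if a = 5 then (if b ≤ 8 then 3/7 else 1/3)
  else if a = 6 then 1/2
  else if a ≤ 8 then (if b = 5 then 4/7 else 1/2)
  else (if b ≤ 5 then 2/3 else 1/2)

open Classical in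
noncomputable def pay (v u : V) : ℚ :=
  if G.Adj v u then
    if G.degree u = 2 then payf (G.degree v) (odeg G v u)
    else if Weak3 G u ∧ 5 ≤ G.degree v then 1/3 else 0
  else 0

lemma payf_nonneg (a b : ℕ) : 0 ≤ payf a b := by
  unfold payf; split_ifs <;> norm_num

lemma payf_le (a b : ℕ) : payf a b ≤ 2/3 := by
  unfold payf; split_ifs <;> norm_num

lemma payf_small {a : ℕ} (h : a ≤ 2) (b : ℕ) : payf a b = 0 := by
  unfold payf; rw [if_pos h]

set_option maxHeartbeats 1000000 in
lemma payf_key {Δ a b : ℕ} (hΔ : 9 ≤ Δ) (ha : a ≤ Δ) (hb : b ≤ Δ)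
    (h : (Δ+1)/2 + 2 ≤ (a+1)/2 + (b+1)/2) : 1 ≤ payf a b + payf b a := by
  unfold payf
  split_ifs <;> first | (norm_num; done) | (exfalso; omega)

lemma pay_nonneg (v u : V) : 0 ≤ pay G v u := by
  unfold pay; split_ifs <;> (first | exact payf_nonneg _ _ | norm_num)

lemma pay_not_adj {v u : V} (h : ¬ G.Adj v u) : pay G v u = 0 := by
  unfold pay; rw [if_neg h]

lemma pay_small {v : V} (h : G.degree v ≤ 2) (u : V) : pay G v u = 0 := by
  unfold pay
  split_ifs with h1 h2 h3
  · exact payf_small h _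
  · exact absurd h3.2 (by omega)
  · rfl
  · rfl

lemma pay_ne_zero {v u : V} (h : pay G v u ≠ 0) : G.Adj v u ∧ G.degree u ≤ 3 := by
  unfold pay at h
  split_ifs at h with h1 h2 h3
  · exact ⟨h1, by omega⟩
  · exact ⟨h1, by rw [h3.1.1]⟩
  · exact absurd rfl h
  · exact absurd rfl h

lemma pay_34 {v : V} (h3 : 3 ≤ G.degree v) (h4 : G.degree v ≤ 4) (u : V) :
    pay G v u = if G.Adj v u ∧ G.degree u = 2 then 1/3 else 0 := by
  by_cases ha : G.Adj v u
  · by_cases h2 : G.degree u = 2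
    · rw [if_pos ⟨ha, h2⟩]; unfold pay payf
      rw [if_pos ha, if_pos h2, if_neg (by omega), if_pos (by omega)]
    · rw [if_neg (by tauto)]; unfold pay
      rw [if_pos ha, if_neg h2, if_neg]
      rintro ⟨-, h5⟩; omega
  · rw [if_neg (by tauto), pay_not_adj G ha]

lemma pay_to_weak3 {v u : V} (hw : Weak3 G u) (ha : G.Adj v u) (h5 : 5 ≤ G.degree v) :
    pay G v u = 1/3 := by
  unfold pay
  rw [if_pos ha, if_neg (by rw [hw.1]; omega), if_pos ⟨hw, h5⟩]

lemma pay_le5 {v : V} (hv : G.degree v = 5) (u : V) : pay G v u ≤ 3/7 := by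
  unfold pay payf
  split_ifs <;> first | (norm_num; done) | (exfalso; omega)

lemma pay_le5' {v u : V} (hv : G.degree v = 5)
    (hn : ¬ (G.degree u = 2 ∧ odeg G v u ≤ 8)) : pay G v u ≤ 1/3 := by
  unfold pay payf
  split_ifs <;> first | (norm_num; done) | (exfalso; omega) | (exfalso; exact hn ⟨by assumption, by assumption⟩)

lemma pay_le6 {v : V} (hv : G.degree v = 6) (u : V) : pay G v u ≤ 1/2 := by
  unfold pay payf
  split_ifs <;> first | (norm_num; done) | (exfalso; omega)

lemma pay_le78 {v : V} (h7 : 7 ≤ G.degree v) (h8 : G.degree v ≤ 8) (u : V) :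
    pay G v u ≤ 4/7 := by
  unfold pay payf
  split_ifs <;> first | (norm_num; done) | (exfalso; omega)

lemma pay_le_big (v u : V) : pay G v u ≤ 2/3 := by
  unfold pay; split_ifs <;> (first | exact payf_le _ _ | norm_num)

/-- the two distinct neighbors of a 2-vertex. -/
lemma nbhd_two {u v : V} (hu : G.degree u = 2) (hv : G.Adj u v) :
    ∃ w, w ≠ v ∧ G.Adj u w ∧ odeg G v u = G.degree w ∧ odeg G w u = G.degree v := by
  have hcard : #(G.neighborFinset u) = 2 := by rw [card_neighborFinset_eq_degree, hu]
  obtain ⟨x, y, hxy, hset⟩ := Finset.card_eq_two.mp hcard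
  have hvmem : v ∈ G.neighborFinset u := (G.mem_neighborFinset u v).2 hv
  rw [hset] at hvmem
  simp only [Finset.mem_insert, Finset.mem_singleton] at hvmem
  unfold odeg
  rcases hvmem with rfl | rfl
  · refine ⟨y, hxy.symm, (G.mem_neighborFinset u y).1 (by rw [hset]; simp), ?_, ?_⟩
    · rw [hset, Finset.erase_insert (by simp [hxy])]; simp
    · rw [hset, Finset.pair_comm, Finset.erase_insert (by simp [hxy.symm])]; simp
  · refine ⟨x, hxy, (G.mem_neighborFinset u x).1 (by rw [hset]; simp), ?_, ?_⟩
    · rw [hset, Finset.pair_comm, Finset.erase_insert (by simp [hxy.symm])]; simp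
    · rw [hset, Finset.erase_insert (by simp [hxy])]; simp

lemma outSum_nbhd (v : V) : ∑ u, pay G v u = ∑ u ∈ G.neighborFinset v, pay G v u :=
  (Finset.sum_subset (Finset.subset_univ _)
    (fun x _ hx => pay_not_adj G (fun hadj => hx ((G.mem_neighborFinset v x).2 hadj)))).symm

lemma inSum_nonneg (v : V) : 0 ≤ ∑ u, pay G u v :=
  Finset.sum_nonneg fun u _ => pay_nonneg G u v

lemma exists_four {α : Type*} [DecidableEq α] {s : Finset α} (h : 4 ≤ #s) :
    ∃ a b c d, a ∈ s ∧ b ∈ s ∧ c ∈ s ∧ d ∈ s ∧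
      a ≠ b ∧ a ≠ c ∧ a ≠ d ∧ b ≠ c ∧ b ≠ d ∧ c ≠ d := by
  obtain ⟨t, hts, ht⟩ := Finset.exists_subset_card_eq h
  rw [show (4:ℕ) = 3 + 1 from rfl, Finset.card_eq_succ] at ht
  obtain ⟨a, r, har, hins, hr3⟩ := ht
  obtain ⟨x, y, z, hxy, hxz, hyz, rfl⟩ := Finset.card_eq_three.mp hr3
  have hat : a ∈ t := hins ▸ Finset.mem_insert_self _ _
  have hxt : x ∈ t := hins ▸ (by simp : x ∈ insert a ({x, y, z} : Finset α))
  have hyt : y ∈ t := hins ▸ (by simp : y ∈ insert a ({x, y, z} : Finset α))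
  have hzt : z ∈ t := hins ▸ (by simp : z ∈ insert a ({x, y, z} : Finset α))
  have hax : a ≠ x := fun h => har (by simp [h])
  have hay : a ≠ y := fun h => har (by simp [h])
  have haz : a ≠ z := fun h => har (by simp [h])
  exact ⟨a, x, y, z, hts hat, hts hxt, hts hyt, hts hzt, hax, hay, haz, hxy, hxz, hyz⟩

lemma mem_card_three {α : Type*} [DecidableEq α] {s : Finset α} {x : α} (h3 : #s = 3)
    (hx : x ∈ s) : ∃ y z, x ≠ y ∧ x ≠ z ∧ y ≠ z ∧ y ∈ s ∧ z ∈ s := by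
  obtain ⟨a, b, c, hab, hac, hbc, rfl⟩ := Finset.card_eq_three.mp h3
  simp only [Finset.mem_insert, Finset.mem_singleton] at hx
  rcases hx with rfl | rfl | rfl
  · exact ⟨b, c, hab, hac, hbc, by simp, by simp⟩
  · exact ⟨a, c, hab.symm, hbc, hac, by simp, by simp⟩
  · exact ⟨a, b, hac.symm, hbc.symm, hab, by simp, by simp⟩

lemma out_34 {v : V} (h3 : 3 ≤ G.degree v) (h4 : G.degree v ≤ 4) :
    ∑ x, pay G v x
      = (#(Finset.univ.filter (fun u => G.Adj v u ∧ G.degree u = 2)) : ℚ) * (1/3) :=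
  calc ∑ x, pay G v x
      = ∑ x : V, (if G.Adj v x ∧ G.degree x = 2 then (1/3:ℚ) else 0) :=
        Finset.sum_congr rfl (fun x _ => pay_34 G h3 h4 x)
    _ = ∑ _x ∈ Finset.univ.filter (fun u => G.Adj v u ∧ G.degree u = 2), (1/3 : ℚ) :=
        (Finset.sum_filter _ _).symm
    _ = _ := by rw [Finset.sum_const, nsmul_eq_mul]

lemma charge_two (hR1 : ¬ ConfigRC1 G) (hΔ : 9 ≤ G.maxDegree) {u : V} (hu : G.degree u = 2) :
    0 ≤ (G.degree u : ℚ) - 3 + (∑ x, pay G x u) - (∑ x, pay G u x) := by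
  obtain ⟨v, hv⟩ := (G.degree_pos_iff_exists_adj u).1 (by omega)
  obtain ⟨w, hwv, hw, ho1, ho2⟩ := nbhd_two G hu hv
  have hkey : (G.maxDegree+1)/2 + 2 ≤ (G.degree v + 1)/2 + (G.degree w + 1)/2 := by
    by_contra hlt
    push_neg at hlt
    exact hR1 ⟨u, v, w, Ne.symm hwv, hv, hw, hu, hlt⟩
  have h1 : 1 ≤ payf (G.degree v) (G.degree w) + payf (G.degree w) (G.degree v) :=
    payf_key hΔ (G.degree_le_maxDegree v) (G.degree_le_maxDegree w) hkey
  have hpv : pay G v u = payf (G.degree v) (G.degree w) := by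
    unfold pay; rw [if_pos hv.symm, if_pos hu, ho1]
  have hpw : pay G w u = payf (G.degree w) (G.degree v) := by
    unfold pay; rw [if_pos hw.symm, if_pos hu, ho2]
  have hsub : ∑ x ∈ ({v, w} : Finset V), pay G x u ≤ ∑ x, pay G x u :=
    Finset.sum_le_sum_of_subset_of_nonneg (Finset.subset_univ _)
      (fun i _ _ => pay_nonneg G i u)
  rw [Finset.sum_pair (Ne.symm hwv)] at hsub
  have hz : ∑ x, pay G u x = 0 :=
    Finset.sum_eq_zero (fun x _ => pay_small G (by omega) x)
  rw [hu, hz]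
  push_cast
  linarith

lemma charge_three (hR2 : ¬ ConfigRC2 G) (hR3 : ¬ ConfigRC3 G) {v : V}
    (hv : G.degree v = 3) :
    0 ≤ (G.degree v : ℚ) - 3 + (∑ x, pay G x v) - (∑ x, pay G v x) := by
  set S := Finset.univ.filter (fun u => G.Adj v u ∧ G.degree u = 2) with hS
  have hSle : #S ≤ 1 := by
    by_contra hgt
    push_neg at hgt
    obtain ⟨a, ha, b, hb, hab⟩ := Finset.one_lt_card.1 hgt
    simp only [hS, Finset.mem_filter, Finset.mem_univ, true_and] at ha hb
    exact hR3 ⟨v, a, b, hab, ha.1, hb.1, hv, ha.2, hb.2⟩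
  have hout : ∑ x, pay G v x = (#S : ℚ) * (1/3) := out_34 G (by omega) (by omega)
  rcases Nat.eq_zero_or_pos #S with h0 | hpos
  · rw [hv, hout, h0]
    have := inSum_nonneg G v
    push_cast
    linarith
  · obtain ⟨x, hxS⟩ := Finset.card_pos.1 hpos
    simp only [hS, Finset.mem_filter, Finset.mem_univ, true_and] at hxS
    have hw3 : Weak3 G v := ⟨hv, x, hxS.1, hxS.2⟩
    have hN3 : #(G.neighborFinset v) = 3 := by rw [card_neighborFinset_eq_degree, hv]
    have hxN : x ∈ G.neighborFinset v := (G.mem_neighborFinset v x).2 hxS.1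
    obtain ⟨y, z, hxy, hxz, hyz, hyN, hzN⟩ := mem_card_three hN3 hxN
    have hadjy := (G.mem_neighborFinset v y).1 hyN
    have hadjz := (G.mem_neighborFinset v z).1 hzN
    have h9 : ¬ (G.degree y + G.degree z ≤ 8) := fun hle =>
      hR2 ⟨v, x, y, z, hxy, hxz, hyz, hxS.1, hadjy, hadjz, hv, hxS.2, hle⟩
    have hin : (1/3 : ℚ) ≤ ∑ u, pay G u v := by
      rcases (by omega : 5 ≤ G.degree y ∨ 5 ≤ G.degree z) with h5 | h5
      · calc (1/3:ℚ) = pay G y v := (pay_to_weak3 G hw3 hadjy.symm h5).symm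
          _ ≤ ∑ u, pay G u v :=
            Finset.single_le_sum (fun i _ => pay_nonneg G i v) (Finset.mem_univ y)
      · calc (1/3:ℚ) = pay G z v := (pay_to_weak3 G hw3 hadjz.symm h5).symm
          _ ≤ ∑ u, pay G u v :=
            Finset.single_le_sum (fun i _ => pay_nonneg G i v) (Finset.mem_univ z)
    rw [hv, hout]
    have hc1 : (#S:ℚ) ≤ 1 := by exact_mod_cast hSle
    push_cast
    linarith

lemma charge_four (hR4 : ¬ ConfigRC4 G) {v : V} (hv : G.degree v = 4) :
    0 ≤ (G.degree v : ℚ) - 3 + (∑ x, pay G x v) - (∑ x, pay G v x) := by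
  set S := Finset.univ.filter (fun u => G.Adj v u ∧ G.degree u = 2) with hS
  have hSle : #S ≤ 3 := by
    by_contra hgt
    push_neg at hgt
    obtain ⟨a, b, c, d, haS, hbS, hcS, hdS, hab, hac, had, hbc, hbd, hcd⟩ :=
      exists_four (by omega : 4 ≤ #S)
    simp only [hS, Finset.mem_filter, Finset.mem_univ, true_and] at haS hbS hcS hdS
    exact hR4 ⟨v, a, b, c, d, by simp [hab, hac, had, hbc, hbd, hcd], hv,
      haS.1, hbS.1, hcS.1, hdS.1, haS.2, hbS.2, hcS.2, hdS.2⟩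
  have hout : ∑ x, pay G v x = (#S : ℚ) * (1/3) := out_34 G (by omega) (by omega)
  have hin := inSum_nonneg G v
  rw [hv, hout]
  have hc1 : (#S:ℚ) ≤ 3 := by exact_mod_cast hSle
  push_cast
  linarith

lemma charge_five (hR5 : ¬ ConfigRC5 G) {v : V} (hv : G.degree v = 5) :
    0 ≤ (G.degree v : ℚ) - 3 + (∑ x, pay G x v) - (∑ x, pay G v x) := by
  have hin := inSum_nonneg G v
  have hout : ∑ x, pay G v x ≤ 2 := by
    rw [outSum_nbhd]
    set N := G.neighborFinset v with hN
    have hNcard : #N = 5 := by rw [hN, card_neighborFinset_eq_degree, hv]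
    set Ndy := N.filter (fun u => G.degree u = 2 ∧ odeg G v u ≤ 8) with hNdy
    have hmem : ∀ x ∈ Ndy, G.Adj v x ∧ G.degree x = 2 ∧ odeg G v x ≤ 8 := by
      intro x hx
      rw [hNdy, Finset.mem_filter] at hx
      exact ⟨(G.mem_neighborFinset v x).1 hx.1, hx.2⟩
    by_cases h4 : 4 ≤ #Ndy
    · obtain ⟨a, b, c, d, haM, hbM, hcM, hdM, hab, hac, had, hbc, hbd, hcd⟩ :=
        exists_four h4
      obtain ⟨haA, ha2, ha8⟩ := hmem a haM
      obtain ⟨hbA, hb2, hb8⟩ := hmem b hbM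
      obtain ⟨hcA, hc2, hc8⟩ := hmem c hcM
      obtain ⟨hdA, hd2, hd8⟩ := hmem d hdM
      have hzero : ∀ u ∈ N, u ∉ ({a,b,c,d} : Finset V) → pay G v u = 0 := by
        intro u huN husub
        by_contra hne
        obtain ⟨huA, hu3⟩ := pay_ne_zero G hne
        simp only [Finset.mem_insert, Finset.mem_singleton] at husub
        push_neg at husub
        obtain ⟨hua, hub, huc, hud⟩ := husub
        refine hR5 ⟨v, a, b, c, d, u, ?_, hv, haA, hbA, hcA, hdA, huA,
          ha2, hb2, hc2, hd2, ?_, hu3⟩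
        · simp [hab, hac, had, hbc, hbd, hcd,
            Ne.symm hua, Ne.symm hub, Ne.symm huc, Ne.symm hud]
        · intro x hx w hw hwv
          have hP : odeg G v x ≤ 8 := by
            rcases (by simpa using hx : x = a ∨ x = b ∨ x = c ∨ x = d) with
              rfl | rfl | rfl | rfl <;> assumption
          have hwm : w ∈ (G.neighborFinset x).erase v :=
            Finset.mem_erase.2 ⟨hwv, (G.mem_neighborFinset x w).2 hw⟩
          calc G.degree w ≤ odeg G v x := by
                unfold odeg
                exact Finset.single_le_sum (f := fun y => G.degree y) (fun i _ => Nat.zero_le _) hwm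
            _ ≤ 8 := hP
      have hsub : ({a,b,c,d} : Finset V) ⊆ N := by
        intro x hx
        simp only [Finset.mem_insert, Finset.mem_singleton] at hx
        rcases hx with rfl | rfl | rfl | rfl
        · exact Finset.filter_subset _ _ haM
        · exact Finset.filter_subset _ _ hbM
        · exact Finset.filter_subset _ _ hcM
        · exact Finset.filter_subset _ _ hdM
      rw [← Finset.sum_subset hsub (fun x hx hxs => hzero x hx hxs)]
      have hcard4 : #({a,b,c,d} : Finset V) ≤ 4 := by
        calc #({a,b,c,d} : Finset V) ≤ #({b,c,d} : Finset V) + 1 :=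
              Finset.card_insert_le _ _
          _ ≤ (#({c,d} : Finset V) + 1) + 1 := by
              exact Nat.add_le_add_right (Finset.card_insert_le _ _) 1
          _ ≤ ((#({d} : Finset V) + 1) + 1) + 1 := by
              exact Nat.add_le_add_right (Nat.add_le_add_right (Finset.card_insert_le _ _) 1) 1
          _ = 4 := by simp
      calc ∑ x ∈ ({a,b,c,d} : Finset V), pay G v x
          ≤ #({a,b,c,d} : Finset V) • (3/7 : ℚ) :=
            Finset.sum_le_card_nsmul _ _ _ (fun x _ => pay_le5 G hv x)
        _ ≤ 2 := by
            rw [nsmul_eq_mul]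
            have : (#({a,b,c,d} : Finset V) : ℚ) ≤ 4 := by exact_mod_cast hcard4
            linarith
    · push_neg at h4
      have hpt : ∀ u ∈ N, pay G v u
          ≤ 1/3 + (if G.degree u = 2 ∧ odeg G v u ≤ 8 then (2/21:ℚ) else 0) := by
        intro u _
        split_ifs with hP
        · calc pay G v u ≤ 3/7 := pay_le5 G hv u
            _ = 1/3 + 2/21 := by norm_num
        · simpa using pay_le5' G hv hP
      calc ∑ u ∈ N, pay G v u
          ≤ ∑ u ∈ N, (1/3 + (if G.degree u = 2 ∧ odeg G v u ≤ 8 then (2/21:ℚ) else 0)) :=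
            Finset.sum_le_sum hpt
        _ = #N * (1/3)
            + ∑ u ∈ N, (if G.degree u = 2 ∧ odeg G v u ≤ 8 then (2/21:ℚ) else 0) := by
            rw [Finset.sum_add_distrib, Finset.sum_const, nsmul_eq_mul]
        _ = #N * (1/3) + #Ndy * (2/21) := by
            rw [← Finset.sum_filter, ← hNdy, Finset.sum_const, nsmul_eq_mul]
        _ ≤ 2 := by
            rw [hNcard]
            have h3q : (#Ndy : ℚ) ≤ 3 := by exact_mod_cast (by omega : #Ndy ≤ 3)
            have h0q : (0:ℚ) ≤ (#Ndy : ℚ) := by positivity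
            push_cast
            linarith
  rw [hv]
  push_cast
  linarith

lemma charge_of_bound {v : V} (C : ℚ) (hC : ∀ u, pay G v u ≤ C)
    (hgoal : (G.degree v : ℚ) * C ≤ (G.degree v : ℚ) - 3) :
    0 ≤ (G.degree v : ℚ) - 3 + (∑ x, pay G x v) - (∑ x, pay G v x) := by
  have hout : ∑ x, pay G v x ≤ (G.degree v : ℚ) * C := by
    rw [outSum_nbhd]
    calc ∑ u ∈ G.neighborFinset v, pay G v u ≤ #(G.neighborFinset v) • C :=
        Finset.sum_le_card_nsmul _ _ _ (fun x _ => hC x)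
      _ = (G.degree v : ℚ) * C := by rw [card_neighborFinset_eq_degree, nsmul_eq_mul]
  have := inSum_nonneg G v
  linarith

end Aux

/-- If `G` is a graph with `mad(G) < 3`, `δ(G) ≥ 2`, and `Δ(G) ≥ 9`, then `G` contains
one of the configurations (RC1)–(RC5). -/
theorem structure_madLT_three {V : Type*} [Fintype V] (G : SimpleGraph V)
    [DecidableRel G.Adj] (hmad : MadLT G 3) (hδ : 2 ≤ G.minDegree) (hΔ : 9 ≤ G.maxDegree) :
    ConfigRC1 G ∨ ConfigRC2 G ∨ ConfigRC3 G ∨ ConfigRC4 G ∨ ConfigRC5 G := by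
  classical
  by_contra hcon
  simp only [not_or] at hcon
  obtain ⟨hR1, hR2, hR3, hR4, hR5⟩ := hcon
  have hne : Nonempty V := by
    by_contra h
    rw [not_nonempty_iff] at h
    have h0 := G.maxDegree_le_of_forall_degree_le 0 (fun v => (h.false v).elim)
    omega
  have key : ∀ v, 0 ≤ (G.degree v : ℚ) - 3 + (∑ x, pay G x v) - (∑ x, pay G v x) := by
    intro v
    have hd2 : 2 ≤ G.degree v := le_trans hδ (G.minDegree_le_degree v)
    by_cases h2 : G.degree v = 2
    · exact charge_two G hR1 hΔ h2
    · by_cases h3 : G.degree v = 3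
      · exact charge_three G hR2 hR3 h3
      · by_cases h4 : G.degree v = 4
        · exact charge_four G hR4 h4
        · by_cases h5 : G.degree v = 5
          · exact charge_five G hR5 h5
          · by_cases h6 : G.degree v = 6
            · apply charge_of_bound G (1/2 : ℚ) (pay_le6 G h6)
              rw [h6]; norm_num
            · by_cases h78 : G.degree v ≤ 8
              · apply charge_of_bound G (4/7 : ℚ) (pay_le78 G (by omega) h78)
                have h7q : (7:ℚ) ≤ G.degree v := by
                  exact_mod_cast (by omega : (7:ℕ) ≤ G.degree v)
                linarith
              · apply charge_of_bound G (2/3 : ℚ) (pay_le_big G v)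
                have h9q : (9:ℚ) ≤ G.degree v := by
                  exact_mod_cast (by omega : (9:ℕ) ≤ G.degree v)
                linarith
  have hsum0 : 0 ≤ ∑ v, ((G.degree v : ℚ) - 3 + (∑ x, pay G x v) - (∑ x, pay G v x)) :=
    Finset.sum_nonneg (fun v _ => key v)
  have hswap : ∑ v : V, ∑ x : V, pay G x v = ∑ v : V, ∑ x : V, pay G v x :=
    Finset.sum_comm
  have hsum1 : ∑ v, ((G.degree v : ℚ) - 3 + (∑ x, pay G x v) - (∑ x, pay G v x))
      = ∑ v, ((G.degree v : ℚ) - 3) := by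
    rw [Finset.sum_sub_distrib, Finset.sum_add_distrib, hswap]
    ring
  have htop := hmad ⊤ (by rw [SimpleGraph.Subgraph.verts_top]; exact Set.univ_nonempty)
  rw [SimpleGraph.Subgraph.edgeSet_top, SimpleGraph.Subgraph.verts_top, Set.ncard_univ,
    Nat.card_eq_fintype_card] at htop
  have hE : G.edgeSet.ncard = #G.edgeFinset := by
    rw [← G.coe_edgeFinset, Set.ncard_coe_finset]
  rw [hE] at htop
  have hhs : ∑ v, G.degree v = 2 * #G.edgeFinset := G.sum_degrees_eq_twice_card_edges
  have hds : (∑ v, (G.degree v : ℚ)) = 2 * (#G.edgeFinset : ℚ) := by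
    exact_mod_cast congrArg (fun n : ℕ => (n : ℚ)) hhs
  have hlt : ∑ v, ((G.degree v : ℚ) - 3) < 0 := by
    rw [Finset.sum_sub_distrib, Finset.sum_const, Finset.card_univ, nsmul_eq_mul, hds]
    linarith
  rw [hsum1] at hsum0
  linarith
end

section
/- The complete bipartite graph K_{2,3} satisfies lc(K_{2,3}) = 4, which exceeds ⌈Δ(K_{2,3})/2⌉ + 1 = 3, and mad(K_{2,3}) = 12/5. -/
open SimpleGraph Finset

noncomputable instance : DecidableRel (completeBipartiteGraph (Fin 2) (Fin 3)).Adj :=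
  Classical.decRel _

section Aux

open SimpleGraph

private abbrev V5 := Fin 2 ⊕ Fin 3
private abbrev G23 := completeBipartiteGraph (Fin 2) (Fin 3)

private lemma adj_lr (i : Fin 2) (j : Fin 3) : G23.Adj (.inl i) (.inr j) := by
  simp

private lemma walk_support_adj {W : Type*} {H : SimpleGraph W} {u v : W}
    (p : H.Walk u v) (hp : 0 < p.length) : ∀ x ∈ p.support, ∃ y, H.Adj x y := by
  induction p with
  | nil => simp at hp
  | @cons u b v h q ih =>
    intro x hx
    rw [SimpleGraph.Walk.support_cons] at hx
    rcases List.mem_cons.1 hx with rfl | hx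
    · exact ⟨_, h⟩
    · cases q with
      | nil =>
        simp only [SimpleGraph.Walk.support_nil, List.mem_singleton] at hx
        subst hx
        exact ⟨_, h.symm⟩
      | cons h2 q2 => exact ih (by simp) x hx

private lemma acyclic_of_small {H : SimpleGraph V5}
    (hsub : ∀ ⦃x y⦄, H.Adj x y → G23.Adj x y) (T : Finset V5) (hT : T.card ≤ 3)
    (hmem : ∀ x y, H.Adj x y → x ∈ T) : H.IsAcyclic := by
  intro v p hp
  have h3 : 3 ≤ p.length := hp.three_le_length
  have hnd : p.support.tail.Nodup := hp.2
  have hlen : p.support.tail.length ≤ T.card := by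
    rw [← List.toFinset_card_of_nodup hnd]
    apply Finset.card_le_card
    intro x hx
    rw [List.mem_toFinset] at hx
    obtain ⟨y, hy⟩ := walk_support_adj p (by omega) x (List.mem_of_mem_tail hx)
    exact hmem x y hy
  have hlt : p.support.tail.length = p.length := by
    have := SimpleGraph.Walk.length_support p
    simp [List.length_tail, this]
  have hlen3 : p.length = 3 := by omega
  clear hp hnd hlen hlt h3
  rcases p with _ | ⟨h1, p⟩
  · simp at hlen3
  rcases p with _ | ⟨h2, p⟩
  · simp at hlen3
  rcases p with _ | ⟨h3', p⟩
  · simp at hlen3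
  rcases p with _ | ⟨h4, p⟩
  · -- triangle
    have g1 := hsub h1
    have g2 := hsub h2
    have g3 := hsub h3'
    clear hlen3
    rename_i b c
    rcases v with i|j <;> rcases b with i'|j' <;> rcases c with i''|j'' <;>
      simp at g1 g2 g3
  · simp [SimpleGraph.Walk.length_cons] at hlen3

end Aux
section Upper
open SimpleGraph

private def cUp : V5 → Fin 4 :=
  Sum.elim (fun i => if i = 0 then 0 else 1) (fun j => if j = 1 then 3 else 2)

private lemma cUp_linear : IsLinearColoring G23 cUp := by
  constructor
  · have key : ∀ x y : V5, (x.isLeft ∧ y.isRight ∨ x.isRight ∧ y.isLeft) →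
        cUp x ≠ cUp y := by decide
    exact fun x y h => key x y h
  · intro a b
    constructor
    · refine acyclic_of_small (fun x y h => h.1)
        (Finset.univ.filter (fun x => cUp x = a ∨ cUp x = b)) ?_ ?_
      · revert a b
        decide
      · intro x y h
        simp only [Finset.mem_filter, Finset.mem_univ, true_and]
        exact h.2.1
    · intro v x y z hx hy hz
      have getr : ∀ {i : Fin 2} {w : V5}, G23.Adj (.inl i) w → ∃ j, w = .inr j := by
        rintro i (i'|j) h
        · simp at h
        · exact ⟨j, rfl⟩
      have getl : ∀ {j : Fin 3} {w : V5}, G23.Adj (.inr j) w → ∃ i, w = .inl i := by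
        rintro j (i|j') h
        · exact ⟨i, rfl⟩
        · simp at h
      rcases v with i | j
      · obtain ⟨jx, rfl⟩ := getr hx.1
        obtain ⟨jy, rfl⟩ := getr hy.1
        obtain ⟨jz, rfl⟩ := getr hz.1
        have core : ∀ (a b : Fin 4) (i : Fin 2) (jx jy jz : Fin 3),
            (cUp (.inl i) = a ∨ cUp (.inl i) = b) →
            (cUp (.inr jx) = a ∨ cUp (.inr jx) = b) →
            (cUp (.inr jy) = a ∨ cUp (.inr jy) = b) →
            (cUp (.inr jz) = a ∨ cUp (.inr jz) = b) →
            jx = jy ∨ jx = jz ∨ jy = jz := by decide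
        rcases core a b i jx jy jz hx.2.1 hx.2.2 hy.2.2 hz.2.2 with h|h|h <;>
          simp [h]
      · obtain ⟨ix, rfl⟩ := getl hx.1
        obtain ⟨iy, rfl⟩ := getl hy.1
        obtain ⟨iz, rfl⟩ := getl hz.1
        have core : ∀ i1 i2 i3 : Fin 2, i1 = i2 ∨ i1 = i3 ∨ i2 = i3 := by decide
        rcases core ix iy iz with h|h|h <;> simp [h]

end Upper
section Lower
open SimpleGraph

private lemma cycle_contra (c : V5 → Fin 3) {j k : Fin 3} (hjk : j ≠ k)
    (h01 : c (.inl 0) = c (.inl 1)) (hw : c (.inr j) = c (.inr k)) :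
    ¬ (pairGraph G23 c (c (.inl 0)) (c (.inr j))).IsAcyclic := by
  intro hac
  have a1 : (pairGraph G23 c (c (.inl 0)) (c (.inr j))).Adj (.inl 0) (.inr j) :=
    ⟨adj_lr 0 j, Or.inl rfl, Or.inr rfl⟩
  have a2 : (pairGraph G23 c (c (.inl 0)) (c (.inr j))).Adj (.inr j) (.inl 1) :=
    ⟨(adj_lr 1 j).symm, Or.inr rfl, Or.inl h01.symm⟩
  have a3 : (pairGraph G23 c (c (.inl 0)) (c (.inr j))).Adj (.inl 1) (.inr k) :=
    ⟨adj_lr 1 k, Or.inl h01.symm, Or.inr hw.symm⟩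
  have a4 : (pairGraph G23 c (c (.inl 0)) (c (.inr j))).Adj (.inr k) (.inl 0) :=
    ⟨(adj_lr 0 k).symm, Or.inr hw.symm, Or.inl rfl⟩
  refine hac (Walk.cons a1 (Walk.cons a2 (Walk.cons a3 (Walk.cons a4 Walk.nil)))) ?_
  rw [Walk.isCycle_def, Walk.isTrail_def]
  refine ⟨?_, by simp, ?_⟩
  · simp [Walk.edges_cons, Sym2.eq_iff, hjk, hjk.symm]
  · simp [Walk.support_cons, hjk]

private lemma lb3 (c : V5 → Fin 3) : ¬ IsLinearColoring G23 c := by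
  rintro ⟨hp, hpair⟩
  have hw : ∀ (j : Fin 3) (i : Fin 2), c (.inr j) ≠ c (.inl i) :=
    fun j i => (hp (adj_lr i j)).symm
  by_cases h01 : c (.inl 0) = c (.inl 1)
  · have core : ∀ u x y z : Fin 3, x ≠ u → y ≠ u → z ≠ u →
        x = y ∨ x = z ∨ y = z := by decide
    rcases core (c (.inl 0)) (c (.inr 0)) (c (.inr 1)) (c (.inr 2))
        (hw 0 0) (hw 1 0) (hw 2 0) with h|h|h
    · exact cycle_contra c (show (0:Fin 3) ≠ 1 by decide) h01 h (hpair _ _).1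
    · exact cycle_contra c (show (0:Fin 3) ≠ 2 by decide) h01 h (hpair _ _).1
    · exact cycle_contra c (show (1:Fin 3) ≠ 2 by decide) h01 h (hpair _ _).1
  · have core : ∀ u v x y : Fin 3, u ≠ v → x ≠ u → x ≠ v → y ≠ u → y ≠ v →
        x = y := by decide
    have e1 : c (.inr 1) = c (.inr 0) :=
      core _ _ _ _ h01 (hw 1 0) (hw 1 1) (hw 0 0) (hw 0 1)
    have e2 : c (.inr 2) = c (.inr 0) :=
      core _ _ _ _ h01 (hw 2 0) (hw 2 1) (hw 0 0) (hw 0 1)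
    have hdeg := (hpair (c (.inl 0)) (c (.inr 0))).2 (.inl 0) (.inr 0) (.inr 1) (.inr 2)
      ⟨adj_lr 0 0, Or.inl rfl, Or.inr rfl⟩
      ⟨adj_lr 0 1, Or.inl rfl, Or.inr e1⟩
      ⟨adj_lr 0 2, Or.inl rfl, Or.inr e2⟩
    simp at hdeg

private lemma lb_le3 {n : ℕ} (hn : n ≤ 3) (c : V5 → Fin n) :
    ¬ IsLinearColoring G23 c := by
  rintro ⟨hp, hpair⟩
  have hpos : 0 < n := Nat.pos_of_ne_zero (by rintro rfl; exact (c (.inl 0)).elim0)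
  have hf : Function.Injective (Fin.castLE hn) := Fin.castLE_injective hn
  apply lb3 (Fin.castLE hn ∘ c)
  classical
  refine ⟨fun x y h he => hp h (hf he), fun a b => ?_⟩
  set pre : Fin 3 → Fin n := fun a =>
    if h : ∃ i : Fin n, Fin.castLE hn i = a then h.choose else ⟨0, hpos⟩ with hpre_def
  have hpre : ∀ (x : V5) (a : Fin 3), Fin.castLE hn (c x) = a → c x = pre a := by
    intro x a hx
    have hex : ∃ i : Fin n, Fin.castLE hn i = a := ⟨c x, hx⟩
    rw [hpre_def]
    simp only [dif_pos hex]
    exact (hf (hex.choose_spec.trans hx.symm)).symm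
  have hle : ∀ x y, (pairGraph G23 (Fin.castLE hn ∘ c) a b).Adj x y →
      (pairGraph G23 c (pre a) (pre b)).Adj x y := by
    rintro x y ⟨hg, hx, hy⟩
    exact ⟨hg, hx.imp (hpre x a) (hpre x b), hy.imp (hpre y a) (hpre y b)⟩
  obtain ⟨hac, hdg⟩ := hpair (pre a) (pre b)
  constructor
  · intro v q hq
    exact hac (q.mapLe hle) (hq.mapLe hle)
  · intro v x y z hx hy hz
    exact hdg v x y z (hle _ _ hx) (hle _ _ hy) (hle _ _ hz)

end Lower
section MadMax
open SimpleGraph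

private lemma maxdeg23 : G23.maxDegree = 3 := by
  have hnb : G23.neighborFinset (.inl 0) = {.inr 0, .inr 1, .inr 2} := by
    ext x
    rw [mem_neighborFinset]
    rcases x with i | j
    · simp
    · simp only [completeBipartiteGraph_adj]
      fin_cases j <;> simp <;> decide
  have hdeg : G23.degree (.inl 0) = 3 := by
    rw [SimpleGraph.degree, hnb]; decide
  refine le_antisymm (maxDegree_le_of_forall_degree_le _ _ ?_) ?_
  swap
  · have := G23.degree_le_maxDegree (Sum.inl 0)
    omega
  intro v
  rcases v with i | j
  · have hsub : G23.neighborFinset (.inl i) ⊆ {.inr 0, .inr 1, .inr 2} := by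
      intro x hx
      rw [mem_neighborFinset] at hx
      rcases x with i' | j
      · simp at hx
      · fin_cases j <;> simp <;> decide
    calc G23.degree (.inl i) ≤ _ := Finset.card_le_card hsub
    _ ≤ 3 := by decide
  · have hsub : G23.neighborFinset (.inr j) ⊆ {.inl 0, .inl 1} := by
      intro x hx
      rw [mem_neighborFinset] at hx
      rcases x with i | j'
      · fin_cases i <;> simp <;> decide
      · simp at hx
    calc G23.degree (.inr j) ≤ _ := Finset.card_le_card hsub
    _ ≤ 3 := by decide

private lemma madLE23 : MadLE G23 (12 / 5) := by
  intro H _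
  classical
  set A : Set (Fin 2) := {i | Sum.inl i ∈ H.verts} with hA_def
  set B : Set (Fin 3) := {j | Sum.inr j ∈ H.verts} with hB_def
  have hV : H.verts = Sum.inl '' A ∪ Sum.inr '' B := by
    ext x
    rcases x with i | j <;> simp [hA_def, hB_def]
  have hVcard : H.verts.ncard = A.ncard + B.ncard := by
    rw [hV, Set.ncard_union_eq ?_ (Set.toFinite _) (Set.toFinite _),
      Set.ncard_image_of_injective _ Sum.inl_injective,
      Set.ncard_image_of_injective _ Sum.inr_injective]
    rw [Set.disjoint_left]
    rintro x ⟨i, -, rfl⟩ ⟨j, -, h⟩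
    exact Sum.inl_ne_inr h.symm
  have pfsymm : ∀ x y : V5,
      (fun x y : V5 => match x, y with
        | .inl i, .inr j => ((i, j) : Fin 2 × Fin 3)
        | .inr j, .inl i => (i, j)
        | _, _ => (0, 0)) x y =
      (fun x y : V5 => match x, y with
        | .inl i, .inr j => ((i, j) : Fin 2 × Fin 3)
        | .inr j, .inl i => (i, j)
        | _, _ => (0, 0)) y x := by
    rintro (i|j) (i'|j') <;> rfl
  set g : Sym2 V5 → Fin 2 × Fin 3 := Sym2.lift ⟨_, pfsymm⟩ with hg_def
  have key : ∀ e ∈ H.edgeSet, (g e).1 ∈ A ∧ (g e).2 ∈ B ∧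
      e = s(Sum.inl (g e).1, Sum.inr (g e).2) := by
    intro e
    refine e.inductionOn ?_
    rintro (i|j) (i'|j') he <;> rw [Subgraph.mem_edgeSet] at he
    · exact absurd he.adj_sub (by simp)
    · exact ⟨H.edge_vert he, H.edge_vert he.symm, rfl⟩
    · refine ⟨H.edge_vert he.symm, H.edge_vert he, ?_⟩
      rw [hg_def]
      exact Sym2.eq_swap.symm
    · exact absurd he.adj_sub (by simp)
  have hE : H.edgeSet.ncard ≤ (A ×ˢ B).ncard := by
    refine Set.ncard_le_ncard_of_injOn g ?_ ?_ (Set.toFinite _)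
    · intro e he
      exact Set.mk_mem_prod (key e he).1 (key e he).2.1
    · intro e he e' he' hgeq
      rw [(key e he).2.2, (key e' he').2.2, hgeq]
  have hprod : (A ×ˢ B).ncard = A.ncard * B.ncard := by
    rw [← Nat.card_coe_set_eq, ← Nat.card_coe_set_eq, ← Nat.card_coe_set_eq,
      Nat.card_congr (Equiv.Set.prod A B), Nat.card_prod]
  have hA2 : A.ncard ≤ 2 := by
    refine le_trans (Set.ncard_le_ncard (Set.subset_univ _) (Set.toFinite _)) ?_
    simp [Set.ncard_univ]
  have hB3 : B.ncard ≤ 3 := by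
    refine le_trans (Set.ncard_le_ncard (Set.subset_univ _) (Set.toFinite _)) ?_
    simp [Set.ncard_univ]
  have key2 : ∀ a b E : ℕ, a ≤ 2 → b ≤ 3 → E ≤ a * b → 5 * E ≤ 6 * (a + b) := by
    intro a b E ha hb hE
    interval_cases a <;> interval_cases b <;> omega
  have h5 := key2 _ _ _ hA2 hB3 (hE.trans hprod.le)
  rw [hVcard]
  have h5q : (5:ℚ) * H.edgeSet.ncard ≤ 6 * (A.ncard + B.ncard) := by exact_mod_cast h5
  push_cast
  linarith

private lemma edge6 : G23.edgeSet.ncard = 6 := by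
  classical
  have : G23.edgeSet = ↑({s(.inl 0, .inr 0), s(.inl 0, .inr 1), s(.inl 0, .inr 2),
      s(.inl 1, .inr 0), s(.inl 1, .inr 1), s(.inl 1, .inr 2)} : Finset (Sym2 V5)) := by
    ext e
    refine e.inductionOn ?_
    rintro (i|j) (i'|j') <;>
      simp only [SimpleGraph.mem_edgeSet, completeBipartiteGraph_adj, Finset.coe_insert,
        Set.mem_insert_iff, Finset.coe_singleton, Set.mem_singleton_iff, Sym2.eq_iff] <;>
      [skip; fin_cases i <;> fin_cases j'; fin_cases i' <;> fin_cases j; skip] <;>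
      simp <;> decide
  rw [this, Set.ncard_coe_finset]
  decide

end MadMax
/-- `K_{2,3}` satisfies `lc(K_{2,3}) = 4`, which exceeds `⌈Δ(K_{2,3})/2⌉ + 1 = 3`,
and `mad(K_{2,3}) = 12/5`. -/
theorem K23_linChromNum_and_mad :
    linChromNum (completeBipartiteGraph (Fin 2) (Fin 3)) = 4 ∧
    ((completeBipartiteGraph (Fin 2) (Fin 3)).maxDegree + 1) / 2 + 1 = 3 ∧
    MadEq (completeBipartiteGraph (Fin 2) (Fin 3)) (12 / 5) := by
  refine ⟨?_, by rw [maxdeg23], ?_⟩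
  · have h4 : 4 ∈ {n : ℕ | ∃ c : V5 → Fin n, IsLinearColoring G23 c} :=
      ⟨cUp, cUp_linear⟩
    refine le_antisymm (Nat.sInf_le h4) (le_csInf ⟨4, h4⟩ ?_)
    rintro n ⟨c, hc⟩
    by_contra h
    exact lb_le3 (by omega) c hc
  · refine ⟨madLE23, ⊤, ⟨Sum.inl 0, trivial⟩, ?_⟩
    rw [SimpleGraph.Subgraph.edgeSet_top, SimpleGraph.Subgraph.verts_top, edge6,
      Set.ncard_univ]
    simp [Nat.card_eq_fintype_card]
    norm_num
end
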